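/- The map d_Q on the forward Cauchy completion M_C^+ of a generalized metric space, defined on equivalence classes by d_Q([{x_n}],[{y_n}]) := lim_n(lim_m d(x_n,y_m)) ∈ [0,∞], is well defined (independent of the choice of representatives) and is a quasi-distance: it is nonnegative, satisfies d_Q(x,y)=d_Q(y,x)=0 iff x=y, and satisfies the triangle inequality d_Q(x,z) ≤ d_Q(x,y) + d_Q(y,z). -/

import Mathlib

open Filter Topology

/-- A generalized metric space: `d` is nonnegative, separates points symmetrically,
satisfies the triangle inequality, and convergence `d (xₙ, x) → 0` is equivalent
to `d (x, xₙ) → 0` (axiom (a4)). -/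
structure GenMetric (M : Type*) where
  d : M → M → ℝ
  d_nonneg : ∀ x y, 0 ≤ d x y
  d_eq_zero_iff : ∀ x y, (d x y = 0 ∧ d y x = 0) ↔ x = y
  d_triangle : ∀ x y z, d x z ≤ d x y + d y z
  symm_conv : ∀ (x : M) (u : ℕ → M),
    Tendsto (fun n => d (u n) x) atTop (𝓝 0) ↔ Tendsto (fun n => d x (u n)) atTop (𝓝 0)

/-- A forward Cauchy sequence for a (possibly non-symmetric) distance. -/
def ForwardCauchy {M : Type*} (d : M → M → ℝ) (u : ℕ → M) : Prop :=
  ∀ ε > (0 : ℝ), ∃ n₀ : ℕ, ∀ n m : ℕ, n₀ ≤ n → n ≤ m → d (u n) (u m) < ε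


/-- The double limit `lim_n (lim_m d (x n) (y m)) = 0`, expressed by the
ε-characterization of iterated limits (valid since `d ≥ 0`). -/
def DoubleLimZero {M : Type*} (d : M → M → ℝ) (x y : ℕ → M) : Prop :=
  ∀ ε > (0 : ℝ), ∃ n₀ : ℕ, ∀ n ≥ n₀, ∃ m₀ : ℕ, ∀ m ≥ m₀, d (x n) (y m) < ε

/-- Two sequences are equivalent when both double limits vanish. -/
def CauEquiv {M : Type*} (d : M → M → ℝ) (x y : ℕ → M) : Prop :=
  DoubleLimZero d x y ∧ DoubleLimZero d y x

open scoped ENNReal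

/-- `ℓ ∈ [0,∞]` is the double limit `lim_n (lim_m d (x n) (y m))`:
for each `n` the inner limit exists in `[0,∞]` and the resulting sequence
of inner limits converges to `ℓ` in `[0,∞]`. -/
def IsDoubleLim {M : Type*} (d : M → M → ℝ) (x y : ℕ → M) (ℓ : ℝ≥0∞) : Prop :=
  ∃ L : ℕ → ℝ≥0∞,
    (∀ n, Tendsto (fun m => ENNReal.ofReal (d (x n) (y m))) atTop (𝓝 (L n))) ∧
    Tendsto L atTop (𝓝 ℓ)

section aux
variable {M : Type*} {d : M → M → ℝ}

lemma ev_le_add {L : ℕ → ℝ≥0∞} {ℓ ε : ℝ≥0∞} (h : Tendsto L atTop (𝓝 ℓ))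
    (hℓ : ℓ ≠ ∞) (hε : ε ≠ 0) : ∀ᶠ n in atTop, L n ≤ ℓ + ε :=
  (h.eventually_lt_const (ENNReal.lt_add_right hℓ hε)).mono fun _ h => h.le

lemma foursum (δ : ℝ) :
    ENNReal.ofReal (δ/4) + ENNReal.ofReal (δ/4) + ENNReal.ofReal (δ/4)
      + ENNReal.ofReal (δ/4) = ENNReal.ofReal δ := by
  rcases le_or_gt δ 0 with h | h
  · simp [ENNReal.ofReal_eq_zero.2, h, ENNReal.ofReal_eq_zero.2 (by linarith : δ/4 ≤ 0)]
  · rw [← ENNReal.ofReal_add (by linarith) (by linarith),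
      ← ENNReal.ofReal_add (by linarith) (by linarith),
      ← ENNReal.ofReal_add (by linarith) (by linarith)]
    congr 1
    ring

variable (hd : ∀ x y, 0 ≤ d x y) (htri : ∀ x y z, d x z ≤ d x y + d y z)
include hd htri

lemma ofReal_tri (p q r : M) : ENNReal.ofReal (d p r)
    ≤ ENNReal.ofReal (d p q) + ENNReal.ofReal (d q r) := by
  rw [← ENNReal.ofReal_add (hd _ _) (hd _ _)]
  exact ENNReal.ofReal_le_ofReal (htri p q r)

/-- The key comparison lemma, with explicit δ. -/
lemma key' {a x y b : ℕ → M} {ℓ ℓ'' : ℝ≥0∞}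
    (hax : DoubleLimZero d a x) (hyb : DoubleLimZero d y b)
    (hxy : IsDoubleLim d x y ℓ) (hab : IsDoubleLim d a b ℓ'')
    (hℓ : ℓ ≠ ∞) {δ : ℝ} (hδ : 0 < δ) : ℓ'' ≤ ℓ + ENNReal.ofReal δ := by
  obtain ⟨L, hL, hLℓ⟩ := hxy
  obtain ⟨L'', hL'', hL''ℓ⟩ := hab
  set e := ENNReal.ofReal (δ/4) with he_def
  have he : e ≠ 0 := by
    simp only [he_def, ne_eq, ENNReal.ofReal_eq_zero, not_le]; linarith
  have heT : e ≠ ∞ := ENNReal.ofReal_ne_top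
  refine le_of_tendsto hL''ℓ ?_
  obtain ⟨n₀, hn₀⟩ := hax (δ/4) (by linarith)
  obtain ⟨N2, hN2⟩ := hyb (δ/4) (by linarith)
  obtain ⟨P, hP⟩ := eventually_atTop.1 (ev_le_add hLℓ hℓ he)
  filter_upwards [eventually_ge_atTop n₀] with n hn
  obtain ⟨m₀, hm₀⟩ := hn₀ n hn
  set p := max m₀ P with hp_def
  have hp1 : d (a n) (x p) < δ/4 := hm₀ p (le_max_left _ _)
  have hp2 : L p ≤ ℓ + e := hP p (le_max_right _ _)
  have hpfin : L p ≠ ∞ :=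
    (hp2.trans_lt (ENNReal.add_lt_top.2 ⟨hℓ.lt_top, heT.lt_top⟩)).ne
  obtain ⟨Mm, hMm⟩ := eventually_atTop.1
    ((hL p).eventually_lt_const (ENNReal.lt_add_right hpfin he))
  set m := max Mm N2 with hm_def
  have hm1 : ENNReal.ofReal (d (x p) (y m)) < L p + e := hMm m (le_max_left _ _)
  obtain ⟨k₀, hk₀⟩ := hN2 m (le_max_right _ _)
  refine le_of_tendsto (hL'' n) ?_
  filter_upwards [eventually_ge_atTop k₀] with k hk
  have hk1 : d (y m) (b k) < δ/4 := hk₀ k hk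
  calc ENNReal.ofReal (d (a n) (b k))
      ≤ ENNReal.ofReal (d (a n) (x p)) + ENNReal.ofReal (d (x p) (b k)) :=
        ofReal_tri hd htri _ _ _
    _ ≤ ENNReal.ofReal (d (a n) (x p)) + (ENNReal.ofReal (d (x p) (y m))
          + ENNReal.ofReal (d (y m) (b k))) := by
        gcongr; exact ofReal_tri hd htri _ _ _
    _ ≤ e + ((L p + e) + e) :=
        add_le_add (ENNReal.ofReal_le_ofReal hp1.le)
          (add_le_add hm1.le (ENNReal.ofReal_le_ofReal hk1.le))
    _ ≤ e + (((ℓ + e) + e) + e) := by gcongr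
    _ = ℓ + (e + e + e + e) := by ring
    _ = ℓ + ENNReal.ofReal δ := by rw [foursum]

lemma key {a x y b : ℕ → M} {ℓ ℓ'' : ℝ≥0∞}
    (hax : DoubleLimZero d a x) (hyb : DoubleLimZero d y b)
    (hxy : IsDoubleLim d x y ℓ) (hab : IsDoubleLim d a b ℓ'') : ℓ'' ≤ ℓ := by
  by_cases hℓ : ℓ = ∞
  · simp [hℓ]
  refine ENNReal.le_of_forall_pos_le_add fun ε hε _ => ?_
  have := key' hd htri hax hyb hxy hab hℓ (δ := (ε : ℝ)) (by exact_mod_cast hε)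
  rwa [ENNReal.ofReal_coe_nnreal] at this

/-- Triangle inequality for double limits. -/
lemma dq_tri {x y z : ℕ → M} {a b c : ℝ≥0∞}
    (hxy : IsDoubleLim d x y a) (hyz : IsDoubleLim d y z b)
    (hxz : IsDoubleLim d x z c) : c ≤ a + b := by
  obtain ⟨La, hLa, hLaa⟩ := hxy
  obtain ⟨Lb, hLb, hLbb⟩ := hyz
  obtain ⟨Lc, hLc, hLcc⟩ := hxz
  refine ENNReal.le_of_forall_pos_le_add fun ε hε hab => ?_
  have ha : a ≠ ∞ := fun h => by simp [h] at hab
  have hb : b ≠ ∞ := fun h => by simp [h] at hab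
  have hε' : (0:ℝ) < (ε : ℝ) := by exact_mod_cast hε
  set e := ENNReal.ofReal ((ε : ℝ)/4) with he_def
  have he : e ≠ 0 := by
    simp only [he_def, ne_eq, ENNReal.ofReal_eq_zero, not_le]; linarith
  have heT : e ≠ ∞ := ENNReal.ofReal_ne_top
  have hfinal : c ≤ a + b + ENNReal.ofReal (ε : ℝ) := by
    refine le_of_tendsto hLcc ?_
    filter_upwards [ev_le_add hLaa ha he] with n hn
    have hafin : La n ≠ ∞ :=
      (hn.trans_lt (ENNReal.add_lt_top.2 ⟨ha.lt_top, heT.lt_top⟩)).ne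
    have h1 : ∀ᶠ m in atTop, ENNReal.ofReal (d (x n) (y m)) < La n + e :=
      (hLa n).eventually_lt_const (ENNReal.lt_add_right hafin he)
    obtain ⟨m, hm1, hm2⟩ := (h1.and (ev_le_add hLbb hb he)).exists
    have hbfin : Lb m ≠ ∞ :=
      (hm2.trans_lt (ENNReal.add_lt_top.2 ⟨hb.lt_top, heT.lt_top⟩)).ne
    refine le_of_tendsto (hLc n) ?_
    filter_upwards [(hLb m).eventually_lt_const (ENNReal.lt_add_right hbfin he)]
      with k hk
    calc ENNReal.ofReal (d (x n) (z k))
        ≤ ENNReal.ofReal (d (x n) (y m)) + ENNReal.ofReal (d (y m) (z k)) :=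
          ofReal_tri hd htri _ _ _
      _ ≤ (La n + e) + (Lb m + e) := add_le_add hm1.le hk.le
      _ ≤ ((a + e) + e) + ((b + e) + e) := by gcongr
      _ = a + b + (e + e + e + e) := by ring
      _ = a + b + ENNReal.ofReal (ε : ℝ) := by rw [foursum]
  rwa [ENNReal.ofReal_coe_nnreal] at hfinal

/-- Inner limits exist when the second sequence is forward Cauchy. -/
lemma inner_lim_exists {y : ℕ → M} (hy : ForwardCauchy d y) (x₀ : M) :
    ∃ l : ℝ≥0∞, Tendsto (fun m => ENNReal.ofReal (d x₀ (y m))) atTop (𝓝 l) := by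
  set f : ℕ → ℝ≥0∞ := fun m => ENNReal.ofReal (d x₀ (y m)) with hf
  have hstep : ∀ δ : ℝ, 0 < δ → liminf f atTop ≠ ∞ →
      limsup f atTop ≤ liminf f atTop + ENNReal.ofReal δ := by
    intro δ hδ hfin
    set e := ENNReal.ofReal (δ/2) with he_def
    have he : e ≠ 0 := by
      simp only [he_def, ne_eq, ENNReal.ofReal_eq_zero, not_le]; linarith
    obtain ⟨m₀, hm₀⟩ := hy (δ/2) (by linarith)
    have hfreq : ∃ᶠ m in atTop, f m < liminf f atTop + e :=
      frequently_lt_of_liminf_lt (by isBoundedDefault)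
        (ENNReal.lt_add_right hfin he)
    obtain ⟨m, hm, hmge⟩ := (hfreq.and_eventually (eventually_ge_atTop m₀)).exists
    refine limsup_le_of_le (by isBoundedDefault) ?_
    filter_upwards [eventually_ge_atTop m] with m' hm'
    have h1 : d x₀ (y m') ≤ d x₀ (y m) + δ/2 := by
      have h2 := hm₀ m m' hmge hm'
      linarith [htri x₀ (y m) (y m')]
    calc f m' ≤ f m + e := by
          rw [hf]
          simp only
          calc ENNReal.ofReal (d x₀ (y m')) ≤ ENNReal.ofReal (d x₀ (y m) + δ/2) :=
              ENNReal.ofReal_le_ofReal h1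
            _ = ENNReal.ofReal (d x₀ (y m)) + e := by
                rw [he_def, ENNReal.ofReal_add (hd _ _) (by linarith)]
      _ ≤ (liminf f atTop + e) + e := add_le_add_left hm.le e
      _ ≤ liminf f atTop + ENNReal.ofReal δ := by
          rw [add_assoc, he_def, ← ENNReal.ofReal_add (by linarith) (by linarith)]
          gcongr
          linarith
  have hle : limsup f atTop ≤ liminf f atTop := by
    by_cases hfin : liminf f atTop = ∞
    · rw [hfin]; exact le_top
    refine ENNReal.le_of_forall_pos_le_add fun ε hε _ => ?_
    have := hstep ε (by exact_mod_cast hε) hfin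
    rwa [ENNReal.ofReal_coe_nnreal] at this
  exact ⟨limsup f atTop,
    tendsto_of_liminf_eq_limsup (le_antisymm (liminf_le_limsup) hle) rfl⟩

lemma dlz_of_isDoubleLim_zero {x y : ℕ → M}
    (h : IsDoubleLim d x y 0) : DoubleLimZero d x y := by
  obtain ⟨L, hL, h0⟩ := h
  intro ε hε
  have hε' : (0:ℝ≥0∞) < ENNReal.ofReal ε := ENNReal.ofReal_pos.2 hε
  obtain ⟨n₀, hn₀⟩ := eventually_atTop.1 (h0.eventually_lt_const hε')
  refine ⟨n₀, fun n hn => ?_⟩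
  obtain ⟨m₀, hm₀⟩ := eventually_atTop.1 ((hL n).eventually_lt_const (hn₀ n hn))
  refine ⟨m₀, fun m hm => ?_⟩
  exact (ENNReal.ofReal_lt_ofReal_iff hε).1 (hm₀ m hm)

lemma isDoubleLim_zero_of_dlz {x y : ℕ → M} (hy : ForwardCauchy d y)
    (h : DoubleLimZero d x y) : IsDoubleLim d x y 0 := by
  choose L hL using fun n => inner_lim_exists hd htri hy (x n)
  refine ⟨L, hL, ENNReal.tendsto_nhds_zero.2 fun ε hε => ?_⟩
  obtain ⟨r, hr0, hrε⟩ : ∃ r : ℝ, 0 < r ∧ ENNReal.ofReal r ≤ ε := by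
    by_cases hεtop : ε = ∞
    · exact ⟨1, one_pos, by simp [hεtop]⟩
    · exact ⟨ε.toReal, ENNReal.toReal_pos hε.ne' hεtop,
        by rw [ENNReal.ofReal_toReal hεtop]⟩
  obtain ⟨n₀, hn₀⟩ := h r hr0
  filter_upwards [eventually_ge_atTop n₀] with n hn
  obtain ⟨m₀, hm₀⟩ := hn₀ n hn
  refine le_trans (le_of_tendsto (hL n) ?_) hrε
  filter_upwards [eventually_ge_atTop m₀] with m hm
  exact ENNReal.ofReal_le_ofReal (hm₀ m hm).le

end aux

/-- The extension `d_Q` of `d` to the forward Cauchy completion, given on classes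
of forward Cauchy sequences by the double limit
`d_Q ([{xₙ}], [{yₙ}]) = lim_n (lim_m d (x n) (y m)) ∈ [0,∞]`, is well defined
(independent of representatives) and is a quasi-distance:
it is nonnegative (automatic in `[0,∞]`), vanishes in both directions exactly on
equivalent (i.e. equal) classes, and satisfies the triangle inequality. -/
theorem dQ_well_defined_quasi_distance {M : Type*} (G : GenMetric M) :
    -- well-definedness on equivalence classes
    (∀ x x' y y' : ℕ → M, ForwardCauchy G.d x → ForwardCauchy G.d x' →
      ForwardCauchy G.d y → ForwardCauchy G.d y' →
      CauEquiv G.d x x' → CauEquiv G.d y y' →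
      ∀ ℓ ℓ' : ℝ≥0∞, IsDoubleLim G.d x y ℓ → IsDoubleLim G.d x' y' ℓ' → ℓ = ℓ') ∧
    -- axiom (a2): `d_Q (x,y) = d_Q (y,x) = 0` iff `x = y` in the completion
    (∀ x y : ℕ → M, ForwardCauchy G.d x → ForwardCauchy G.d y →
      ((IsDoubleLim G.d x y 0 ∧ IsDoubleLim G.d y x 0) ↔ CauEquiv G.d x y)) ∧
    -- axiom (a3): triangle inequality
    (∀ x y z : ℕ → M, ForwardCauchy G.d x → ForwardCauchy G.d y → ForwardCauchy G.d z →
      ∀ a b c : ℝ≥0∞, IsDoubleLim G.d x y a → IsDoubleLim G.d y z b →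
        IsDoubleLim G.d x z c → c ≤ a + b) := by
  refine ⟨?_, ?_, ?_⟩
  · intro x x' y y' _ _ _ _ hxx' hyy' ℓ ℓ' h h'
    exact le_antisymm
      (key G.d_nonneg G.d_triangle hxx'.1 hyy'.2 h' h)
      (key G.d_nonneg G.d_triangle hxx'.2 hyy'.1 h h')
  · intro x y hx hy
    constructor
    · rintro ⟨h1, h2⟩
      exact ⟨dlz_of_isDoubleLim_zero G.d_nonneg G.d_triangle h1,
        dlz_of_isDoubleLim_zero G.d_nonneg G.d_triangle h2⟩
    · rintro ⟨h1, h2⟩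
      exact ⟨isDoubleLim_zero_of_dlz G.d_nonneg G.d_triangle hy h1,
        isDoubleLim_zero_of_dlz G.d_nonneg G.d_triangle hx h2⟩
  · intro x y z _ _ _ a b c hab hbc hac
    exact dq_tri G.d_nonneg G.d_triangle hab hbc hac
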